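/- The dual (σ_Z-logical) distance of the toric code on the n×n toric lattice equals n: the minimum cardinality of a 1-cocycle T with |T ∩ L_0| odd is exactly n. In particular every such cocycle has at least n edges, and the cut C_0 is a 1-cocycle of cardinality n with |C_0 ∩ L_0| = 1. -/

import Mathlib

/-- The boundary of a face `f` of the `n × n` toric lattice: the four edges bounding `f`. -/
def toricFaceBd (n : ℕ) (f : ZMod n × ZMod n) : Set ((ZMod n × ZMod n) × Fin 2) :=
  {(f, 0), (f, 1), (f + (0, 1), 0), (f + (1, 0), 1)}

/-- `T` is a 1-cocycle of the toric lattice: it meets every face boundary in an even number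
of edges. -/
def toricIsCocycle (n : ℕ) (T : Set ((ZMod n × ZMod n) × Fin 2)) : Prop :=
  ∀ f : ZMod n × ZMod n, Even ((T ∩ toricFaceBd n f).ncard)

/-- The vertical cut `C_x`: all horizontal (direction-0) edges with first coordinate `x`. -/
def toricCut (n : ℕ) (x : ZMod n) : Set ((ZMod n × ZMod n) × Fin 2) :=
  {e | ∃ y : ZMod n, e = ((x, y), 0)}

/-- The horizontal loop `L_y`: all horizontal (direction-0) edges with second coordinate `y`. -/
def toricLoop (n : ℕ) (y : ZMod n) : Set ((ZMod n × ZMod n) × Fin 2) :=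
  {e | ∃ x : ZMod n, e = ((x, y), 0)}


section aux
variable {n : ℕ} [NeZero n]

open Classical in
/-- ncard of intersection with a face boundary as a sum of indicators. -/
lemma ncard_inter_faceBd (h1 : (1 : ZMod n) ≠ 0) (T : Set ((ZMod n × ZMod n) × Fin 2))
    (f : ZMod n × ZMod n) :
    (T ∩ toricFaceBd n f).ncard =
      (if (f, 0) ∈ T then 1 else 0) + (if (f, (1 : Fin 2)) ∈ T then 1 else 0)
        + (if (f + (0, 1), 0) ∈ T then 1 else 0) + (if (f + (1, 0), (1 : Fin 2)) ∈ T then 1 else 0) := by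
  have hset : T ∩ toricFaceBd n f =
      ↑(({(f, 0), (f, 1), (f + (0, 1), 0), (f + (1, 0), 1)} :
          Finset ((ZMod n × ZMod n) × Fin 2)).filter (· ∈ T)) := by
    ext e
    simp only [toricFaceBd, Set.mem_inter_iff, Set.mem_insert_iff, Set.mem_singleton_iff,
      Finset.coe_filter, Finset.mem_insert, Finset.mem_singleton, Set.mem_setOf_eq]
    tauto
  rw [hset, Set.ncard_coe_finset, Finset.card_filter]
  have h01 : f + ((0 : ZMod n), (1 : ZMod n)) ≠ f := by
    intro h
    apply h1
    have := congrArg Prod.snd h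
    simpa using this
  have h10 : f + ((1 : ZMod n), (0 : ZMod n)) ≠ f := by
    intro h
    apply h1
    have := congrArg Prod.fst h
    simpa using this
  rw [show ({(f, 0), (f, 1), (f + (0, 1), 0), (f + (1, 0), 1)} :
      Finset ((ZMod n × ZMod n) × Fin 2)) =
      insert (f, 0) (insert (f, 1) (insert (f + (0, 1), 0) {(f + (1, 0), 1)})) from rfl]
  rw [Finset.sum_insert (by simp [Prod.ext_iff, Fin.ext_iff, h1, h01, h10]),
    Finset.sum_insert (by simp [Prod.ext_iff, Fin.ext_iff, h1, h01, h10]),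
    Finset.sum_insert (by simp [Prod.ext_iff, Fin.ext_iff, h1, h01, h10]),
    Finset.sum_singleton]
  ring

open Classical Finset in
lemma ncard_inter_loop (T : Set ((ZMod n × ZMod n) × Fin 2)) (y : ZMod n) :
    (T ∩ toricLoop n y).ncard = ∑ a : ZMod n, (if ((a, y), 0) ∈ T then 1 else 0) := by
  have hinj : Function.Injective (fun a : ZMod n => (((a, y), 0) : (ZMod n × ZMod n) × Fin 2)) := by
    intro a b h
    simpa [Prod.ext_iff] using h
  have hset : T ∩ toricLoop n y =
      ↑(((univ : Finset (ZMod n)).filter (fun a => ((a, y), 0) ∈ T)).image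
        (fun a => (((a, y), 0) : (ZMod n × ZMod n) × Fin 2))) := by
    ext e
    simp only [Set.mem_inter_iff, toricLoop, Set.mem_setOf_eq, coe_image, coe_filter, mem_univ,
      true_and, Set.mem_image, Set.mem_setOf_eq]
    constructor
    · rintro ⟨he, x, rfl⟩; exact ⟨x, he, rfl⟩
    · rintro ⟨x, hx, rfl⟩; exact ⟨hx, x, rfl⟩
  rw [hset, Set.ncard_coe_finset, Finset.card_image_of_injective _ hinj, Finset.card_filter]

open Finset in
lemma cut_ncard : (toricCut n (0 : ZMod n)).ncard = n := by
  have hinj : Function.Injective (fun y : ZMod n => ((((0 : ZMod n), y), 0) : (ZMod n × ZMod n) × Fin 2)) := by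
    intro a b h
    simpa [Prod.ext_iff] using h
  have hset : toricCut n (0 : ZMod n) =
      ↑((univ : Finset (ZMod n)).image (fun y => ((((0 : ZMod n), y), 0) : (ZMod n × ZMod n) × Fin 2))) := by
    ext e
    simp [toricCut, eq_comm]
  rw [hset, Set.ncard_coe_finset, Finset.card_image_of_injective _ hinj, Finset.card_univ,
    ZMod.card]

lemma cut_inter_loop : (toricCut n (0 : ZMod n) ∩ toricLoop n 0).ncard = 1 := by
  have : toricCut n (0 : ZMod n) ∩ toricLoop n 0 = {(((0 : ZMod n), (0 : ZMod n)), 0)} := by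
    ext e
    simp only [Set.mem_inter_iff, toricCut, toricLoop, Set.mem_setOf_eq, Set.mem_singleton_iff]
    constructor
    · rintro ⟨⟨y, rfl⟩, x, h⟩
      simp_all [Prod.ext_iff]
    · rintro rfl
      exact ⟨⟨0, rfl⟩, 0, rfl⟩
  rw [this, Set.ncard_singleton]

lemma cut_cocycle (h1 : (1 : ZMod n) ≠ 0) : toricIsCocycle n (toricCut n (0 : ZMod n)) := by
  intro f
  by_cases hf : f.1 = 0
  · have : toricCut n (0 : ZMod n) ∩ toricFaceBd n f = {(f, 0), (f + (0, 1), 0)} := by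
      ext e
      simp only [Set.mem_inter_iff, toricCut, toricFaceBd, Set.mem_setOf_eq,
        Set.mem_insert_iff, Set.mem_singleton_iff]
      constructor
      · rintro ⟨⟨y, rfl⟩, h⟩
        rcases h with h | h | h | h <;> simp_all [Prod.ext_iff]
      · rintro (rfl | rfl)
        · exact ⟨⟨f.2, by simp [Prod.ext_iff, hf]⟩, Or.inl rfl⟩
        · exact ⟨⟨f.2 + 1, by simp [Prod.ext_iff, hf]⟩, Or.inr (Or.inr (Or.inl rfl))⟩
    rw [this]
    have hne : (f, (0 : Fin 2)) ≠ (f + (0, 1), 0) := by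
      simp [Prod.ext_iff, h1]
    rw [Set.ncard_pair hne]
    exact even_two
  · have : toricCut n (0 : ZMod n) ∩ toricFaceBd n f = ∅ := by
      ext e
      simp only [Set.mem_inter_iff, toricCut, toricFaceBd, Set.mem_setOf_eq,
        Set.mem_insert_iff, Set.mem_singleton_iff, Set.mem_empty_iff_false, iff_false, not_and]
      rintro ⟨y, rfl⟩ h
      rcases h with h | h | h | h <;> simp_all [Prod.ext_iff] <;> exact hf (by simp_all)
    rw [this]
    simp

open Classical Finset in
lemma toric_lower_bound (h1 : (1 : ZMod n) ≠ 0) (T : Set ((ZMod n × ZMod n) × Fin 2))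
    (hT : toricIsCocycle n T) (hodd : Odd ((T ∩ toricLoop n 0).ncard)) :
    n ≤ T.ncard := by
  set ind : (ZMod n × ZMod n) × Fin 2 → ℕ := fun e => if e ∈ T then 1 else 0 with hind
  set g : ZMod n → ℕ := fun b => ∑ a : ZMod n, ind ((a, b), 0) with hg
  -- each row has odd intersection
  have hstep : ∀ b : ZMod n, (Odd (g b) ↔ Odd (g (b + 1))) := by
    intro b
    have htot : Even (∑ a : ZMod n,
        (ind ((a, b), 0) + ind ((a, b), 1) + ind ((a, b) + (0, 1), 0) + ind ((a, b) + (1, 0), 1))) := by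
      apply Finset.sum_induction _ Even (fun x y => Even.add) Even.zero
      intro a _
      rw [← ncard_inter_faceBd h1 T (a, b)]
      exact hT (a, b)
    have hsplit : (∑ a : ZMod n,
        (ind ((a, b), 0) + ind ((a, b), 1) + ind ((a, b) + (0, 1), 0) + ind ((a, b) + (1, 0), 1)))
        = (g b + g (b + 1)) + (∑ a : ZMod n, ind ((a, b), 1) + ∑ a : ZMod n, ind ((a + 1, b), 1)) := by
      simp only [Finset.sum_add_distrib, hg]
      have e1 : ∀ a : ZMod n, ((a, b) + ((0 : ZMod n), (1 : ZMod n)), (0 : Fin 2)) = ((a, b + 1), 0) := by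
        intro a; simp [Prod.ext_iff]
      have e2 : ∀ a : ZMod n, ((a, b) + ((1 : ZMod n), (0 : ZMod n)), (1 : Fin 2)) = ((a + 1, b), 1) := by
        intro a; simp [Prod.ext_iff]
      simp only [e1, e2]
      ring
    have hvert : ∑ a : ZMod n, ind ((a + 1, b), 1) = ∑ a : ZMod n, ind ((a, b), 1) :=
      Fintype.sum_equiv (Equiv.addRight (1 : ZMod n)) _ _ (fun a => rfl)
    rw [hsplit] at htot
    have hvv : Even (∑ a : ZMod n, ind ((a, b), 1) + ∑ a : ZMod n, ind ((a + 1, b), 1)) := by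
      rw [hvert]; exact Even.add_self _
    have hgb : Even (g b + g (b + 1)) := (Nat.even_add.mp htot).mpr hvv
    rw [Nat.even_add] at hgb
    simp only [← Nat.not_even_iff_odd]
    tauto
  have hodd0 : Odd (g 0) := by
    have := ncard_inter_loop (n := n) T 0
    rwa [this] at hodd
  have hoddk : ∀ k : ℕ, Odd (g (k : ZMod n)) := by
    intro k
    induction k with
    | zero => simpa using hodd0
    | succ k ih => push_cast; exact (hstep _).mp ih
  have hoddb : ∀ b : ZMod n, Odd (g b) := by
    intro b
    have := hoddk b.val
    rwa [ZMod.natCast_rightInverse b] at this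
  -- pick an element in each row
  have hne : ∀ b : ZMod n, (T ∩ toricLoop n b).Nonempty := by
    intro b
    apply Set.nonempty_of_ncard_ne_zero
    rw [ncard_inter_loop]
    exact (hoddb b).pos.ne'
  choose e he using hne
  have hmem : ∀ b, e b ∈ T := fun b => (he b).1
  have hinj : Function.Injective e := by
    intro a b hab
    obtain ⟨xa, hxa⟩ := (he a).2
    obtain ⟨xb, hxb⟩ := (he b).2
    have := hxa ▸ hab
    rw [hxb] at this
    have h2 : xb = xa ∧ b = a := by simpa [Prod.ext_iff] using this.symm
    exact h2.2.symm
  have hsub : Set.range e ⊆ T := by rintro _ ⟨b, rfl⟩; exact hmem b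
  have hcard : (Set.range e).ncard = n := by
    rw [← Set.image_univ, ← Finset.coe_univ, ← Finset.coe_image, Set.ncard_coe_finset,
      Finset.card_image_of_injective _ hinj, Finset.card_univ, ZMod.card]
  calc n = (Set.range e).ncard := hcard.symm
    _ ≤ T.ncard := Set.ncard_le_ncard hsub (Set.toFinite T)
end aux

/-- The dual (σ_Z-logical) distance of the toric code equals `n`: the least cardinality of a
1-cocycle meeting the loop `L_0` an odd number of times is `n`, and the cut `C_0` is a
1-cocycle of cardinality `n` meeting `L_0` in exactly one edge. -/
theorem toric_code_dual_distance (n : ℕ) (hn : 2 ≤ n) :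
    IsLeast {k : ℕ | ∃ T : Set ((ZMod n × ZMod n) × Fin 2),
        toricIsCocycle n T ∧ Odd ((T ∩ toricLoop n 0).ncard) ∧ T.ncard = k} n ∧
    toricIsCocycle n (toricCut n 0) ∧ (toricCut n 0).ncard = n ∧
    (toricCut n 0 ∩ toricLoop n 0).ncard = 1 := by
  haveI : NeZero n := ⟨by omega⟩
  haveI : Fact (1 < n) := ⟨by omega⟩
  have h1 : (1 : ZMod n) ≠ 0 := one_ne_zero
  refine ⟨⟨⟨toricCut n 0, cut_cocycle h1, ?_, cut_ncard⟩, ?_⟩,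
    cut_cocycle h1, cut_ncard, cut_inter_loop⟩
  · rw [cut_inter_loop]; exact odd_one
  · rintro k ⟨T, hT, hodd, rfl⟩
    exact toric_lower_bound h1 T hT hodd
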